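/- Let H > 0, C₀ ≥ 0, F ∈ ℝ, and let f : [0,∞) → ℝ be a C¹ function satisfying |f'(t) + 3H·f(t) - H·F·e^{-2Ht}| ≤ C₀·e^{-4Ht} for all t ≥ 0. Then the limit L = lim_{t→∞} e^{3Ht}·(f(t) - F·e^{-2Ht}) exists, and |f(t) - F·e^{-2Ht} - L·e^{-3Ht}| ≤ (C₀/H)·e^{-4Ht} for all t ≥ 0. -/

import Mathlib

open Real Filter MeasureTheory Set

lemma exp_hasDerivAt_aux (c t : ℝ) :
    HasDerivAt (fun t => Real.exp (c * t)) (c * Real.exp (c * t)) t := by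
  simpa [mul_comm] using ((hasDerivAt_id t).const_mul c).exp

/-- two-term asymptotic expansion ODE lemma. -/
theorem ode_two_term_expansion
    (H C₀ F : ℝ) (hH : 0 < H) (hC : 0 ≤ C₀)
    (f : ℝ → ℝ) (hf : ContDiff ℝ 1 f)
    (hf' : ∀ t, 0 ≤ t →
      |deriv f t + 3 * H * f t - H * F * Real.exp (-2 * H * t)|
        ≤ C₀ * Real.exp (-4 * H * t)) :
    ∃ L : ℝ,
      Tendsto (fun t => Real.exp (3 * H * t) * (f t - F * Real.exp (-2 * H * t)))
        atTop (nhds L) ∧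
      ∀ t, 0 ≤ t →
        |f t - F * Real.exp (-2 * H * t) - L * Real.exp (-3 * H * t)|
          ≤ (C₀ / H) * Real.exp (-4 * H * t) := by
  set u : ℝ → ℝ := fun t => Real.exp (3 * H * t) * (f t - F * Real.exp (-2 * H * t)) with hu
  set v : ℝ → ℝ := fun t =>
    Real.exp (3 * H * t) * (deriv f t + 3 * H * f t - H * F * Real.exp (-2 * H * t)) with hv
  have hderivf : ∀ t, HasDerivAt f (deriv f t) t := fun t =>
    (hf.differentiable one_ne_zero t).hasDerivAt
  have hud : ∀ t, HasDerivAt u (v t) t := by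
    intro t
    have h1 := exp_hasDerivAt_aux (3 * H) t
    have h2 := exp_hasDerivAt_aux (-2 * H) t
    have := h1.mul ((hderivf t).sub (h2.const_mul F))
    refine this.congr_deriv ?_
    simp only [hv, Pi.sub_apply]
    ring
  have hvcont : Continuous v := by
    have h1 : Continuous (deriv f) := hf.continuous_deriv le_rfl
    have h2 : Continuous f := hf.continuous
    fun_prop
  have hvbound : ∀ t, 0 ≤ t → |v t| ≤ C₀ * Real.exp (-H * t) := by
    intro t ht
    rw [hv]
    simp only [abs_mul, abs_of_pos (Real.exp_pos _)]
    calc Real.exp (3 * H * t) * |deriv f t + 3 * H * f t - H * F * Real.exp (-2 * H * t)|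
        ≤ Real.exp (3 * H * t) * (C₀ * Real.exp (-4 * H * t)) :=
          mul_le_mul_of_nonneg_left (hf' t ht) (Real.exp_pos _).le
      _ = C₀ * Real.exp (-H * t) := by
          rw [mul_left_comm, ← Real.exp_add]
          congr 1
          ring
  have hexpint : ∀ a : ℝ, IntegrableOn (fun x => C₀ * Real.exp (-H * x)) (Ioi a) :=
    fun a => (exp_neg_integrableOn_Ioi a hH).const_mul C₀
  have hvint : ∀ a : ℝ, 0 ≤ a → IntegrableOn v (Ioi a) := by
    intro a ha
    refine Integrable.mono' (hexpint a) hvcont.aestronglyMeasurable ?_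
    filter_upwards [ae_restrict_mem measurableSet_Ioi] with x hx
    exact hvbound x (ha.trans (le_of_lt hx))
  have hult := tendsto_limUnder_of_hasDerivAt_of_integrableOn_Ioi
    (f := u) (f' := v) (a := 0) (fun x _ => hud x) (hvint 0 le_rfl)
  set L := limUnder atTop u with hL
  refine ⟨L, hult, fun t ht => ?_⟩
  have hint : ∫ x in Ioi t, v x = L - u t :=
    integral_Ioi_of_hasDerivAt_of_tendsto
      ((hud t).continuousAt.continuousWithinAt) (fun x _ => hud x) (hvint t ht) hult
  have hexpval : ∫ x in Ioi t, C₀ * Real.exp (-H * x) = (C₀ / H) * Real.exp (-H * t) := by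
    have hanti : ∀ x ∈ Ioi t, HasDerivAt (fun x => -(C₀ / H) * Real.exp (-H * x))
        (C₀ * Real.exp (-H * x)) x := by
      intro x _
      have := (exp_hasDerivAt_aux (-H) x).const_mul (-(C₀ / H))
      refine this.congr_deriv ?_
      field_simp
    have htend : Tendsto (fun x => -(C₀ / H) * Real.exp (-H * x)) atTop (nhds 0) := by
      have h0 : Tendsto (fun x : ℝ => Real.exp (-(H * x))) atTop (nhds 0) :=
        Real.tendsto_exp_neg_atTop_nhds_zero.comp (tendsto_id.const_mul_atTop hH)
      have h0' : Tendsto (fun x : ℝ => Real.exp (-H * x)) atTop (nhds 0) := by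
        simpa [neg_mul] using h0
      simpa using h0'.const_mul (-(C₀ / H))
    have := integral_Ioi_of_hasDerivAt_of_tendsto
      (Continuous.continuousWithinAt (by continuity)) hanti (hexpint t) htend
    rw [this]; ring
  have hbound : |L - u t| ≤ (C₀ / H) * Real.exp (-H * t) := by
    rw [← hint, ← hexpval, ← Real.norm_eq_abs]
    refine norm_integral_le_of_norm_le (hexpint t) ?_
    filter_upwards [ae_restrict_mem measurableSet_Ioi] with x hx
    rw [Real.norm_eq_abs]
    exact hvbound x (ht.trans (le_of_lt hx))
  have h1 : Real.exp (3 * H * t) * Real.exp (-3 * H * t) = 1 := by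
    rw [← Real.exp_add]
    norm_num
  have key : f t - F * Real.exp (-2 * H * t) - L * Real.exp (-3 * H * t)
      = -(L - u t) * Real.exp (-3 * H * t) := by
    rw [hu]
    linear_combination (-(f t - F * Real.exp (-2 * H * t))) * h1
  rw [key, abs_mul, abs_neg, abs_of_pos (Real.exp_pos _)]
  calc |L - u t| * Real.exp (-3 * H * t)
      ≤ ((C₀ / H) * Real.exp (-H * t)) * Real.exp (-3 * H * t) :=
        mul_le_mul_of_nonneg_right hbound (Real.exp_pos _).le
    _ = (C₀ / H) * Real.exp (-4 * H * t) := by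
        rw [mul_assoc, ← Real.exp_add]
        congr 2
        ring
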